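/- arXiv:2201.12565 — 3 statements merged into one kernel-verified Lean document; each statement's English description precedes it below -/
import Mathlib

section
/- Fix constants c_k > 0 for k = 1,…,K and T > 0. The maximum of Σ_{k=1}^K τ_k log2(1 + c_k/τ_k) over τ_k ≥ 0 with Σ_k τ_k ≤ T is attained at a point where every τ_k > 0 and all ratios c_k/τ_k are equal, i.e., τ_k* = T·c_k/(Σ_j c_j), and the optimal value equals T·log2(1 + (Σ_k c_k)/T). -/
open Real Finset

private lemma tangent_ineq (c τ S T : ℝ) (hc : 0 < c) (hτ : 0 ≤ τ) (hS : 0 < S)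
    (hT : 0 < T) :
    τ * Real.log (1 + c / τ) ≤ τ * Real.log (1 + S / T) + (c - τ * (S / T)) / (1 + S / T) := by
  have hST : 0 < 1 + S / T := by positivity
  rcases hτ.eq_or_lt with h0 | hτ'
  · subst h0
    simp only [div_zero, zero_mul, add_zero, Real.log_one, mul_zero, zero_add, zero_mul,
      sub_zero]
    positivity
  · have h1 : 0 < 1 + c / τ := by positivity
    have hlog := Real.log_le_sub_one_of_pos (x := (1 + c / τ) / (1 + S / T)) (by positivity)
    rw [Real.log_div (ne_of_gt h1) (ne_of_gt hST)] at hlog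
    have key : τ * ((1 + c / τ) / (1 + S / T) - 1) = (c - τ * (S / T)) / (1 + S / T) := by
      field_simp
      ring
    nlinarith [mul_le_mul_of_nonneg_left hlog hτ]

private lemma self_div_le_log (x : ℝ) (hx : 0 < x) : x / (1 + x) ≤ Real.log (1 + x) := by
  have h1 : 0 < 1 + x := by positivity
  have := Real.log_le_sub_one_of_pos (x := 1 / (1 + x)) (by positivity)
  rw [Real.log_div one_ne_zero (ne_of_gt h1), Real.log_one] at this
  have key : (1 : ℝ) / (1 + x) - 1 = -(x / (1 + x)) := by field_simp; ring
  linarith [key ▸ this]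

/-- Equal-SNR optimal time allocation: the maximum of Σ τ_k log2(1 + c_k/τ_k) subject to
τ_k ≥ 0, Σ τ_k ≤ T is attained at τ_k* = T c_k / Σ c_j (all positive, all ratios equal),
with optimal value T log2(1 + (Σ c_k)/T). -/
theorem stmt_2 (K : ℕ) (c : Fin K → ℝ) (T : ℝ) (hc : ∀ k, 0 < c k) (hT : 0 < T) :
    (∀ τ : Fin K → ℝ, (∀ k, 0 ≤ τ k) → (∑ k, τ k) ≤ T →
      ∑ k, τ k * Real.logb 2 (1 + c k / τ k) ≤ T * Real.logb 2 (1 + (∑ k, c k) / T)) ∧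
    (∀ k, 0 < T * c k / (∑ j, c j)) ∧
    (∑ k, T * c k / (∑ j, c j)) ≤ T ∧
    (∑ k, (T * c k / (∑ j, c j)) * Real.logb 2 (1 + c k / (T * c k / (∑ j, c j))))
      = T * Real.logb 2 (1 + (∑ k, c k) / T) ∧
    (∀ k j, c k / (T * c k / (∑ i, c i)) = c j / (T * c j / (∑ i, c i))) := by
  by_cases hK : K = 0
  · subst hK
    refine ⟨?_, ?_, ?_, ?_, ?_⟩
    · intro τ _ _
      simp
    · intro k; exact absurd k.2 (by simp)
    · simp [hT.le]
    · simp
    · intro k; exact absurd k.2 (by simp)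
  · have hne : (Finset.univ : Finset (Fin K)).Nonempty := by
      simpa [Finset.univ_nonempty_iff, Fin.pos_iff_nonempty] using Nat.pos_of_ne_zero hK
    set S : ℝ := ∑ k, c k with hSdef
    have hS : 0 < S := Finset.sum_pos (fun j _ => hc j) hne
    have hST : 0 < 1 + S / T := by positivity
    have hlog2 : 0 < Real.log 2 := Real.log_pos (by norm_num)
    have hratio : ∀ k : Fin K, c k / (T * c k / S) = S / T := by
      intro k
      have hck := hc k
      field_simp
    have hsumτ : (∑ k, T * c k / S) = T := by
      rw [← Finset.sum_div, ← Finset.mul_sum, ← hSdef, mul_div_assoc,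
        div_self hS.ne', mul_one]
    refine ⟨?_, ?_, ?_, ?_, ?_⟩
    · -- main inequality
      intro τ hτ hsum
      have hmain : ∑ k, τ k * Real.log (1 + c k / τ k) ≤ T * Real.log (1 + S / T) := by
        have step1 : ∑ k, τ k * Real.log (1 + c k / τ k)
            ≤ ∑ k, (τ k * Real.log (1 + S / T) + (c k - τ k * (S / T)) / (1 + S / T)) :=
          Finset.sum_le_sum fun k _ => tangent_ineq (c k) (τ k) S T (hc k) (hτ k) hS hT
        rw [Finset.sum_add_distrib, ← Finset.sum_mul, ← Finset.sum_div,
          Finset.sum_sub_distrib, ← Finset.sum_mul, ← hSdef] at step1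
        set t : ℝ := ∑ k, τ k with htdef
        have ht0 : 0 ≤ t := Finset.sum_nonneg fun k _ => hτ k
        have hkey := self_div_le_log (S / T) (by positivity)
        have h2 : (S - t * (S / T)) / (1 + S / T) ≤ (T - t) * Real.log (1 + S / T) := by
          have heq : (S - t * (S / T)) / (1 + S / T) = (T - t) * ((S / T) / (1 + S / T)) := by
            field_simp
          rw [heq]
          exact mul_le_mul_of_nonneg_left hkey (by linarith)
        have hSTpos : 0 < S / T := div_pos hS hT
        nlinarith [Real.log_nonneg (by linarith : (1:ℝ) ≤ 1 + S / T)]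
      simp only [Real.logb, mul_div_assoc']
      rw [← Finset.sum_div, div_le_div_iff_of_pos_right hlog2]
      exact hmain
    · intro k
      have := hc k
      positivity
    · exact hsumτ.le
    · calc ∑ k, (T * c k / S) * Real.logb 2 (1 + c k / (T * c k / S))
          = ∑ k, (T * c k / S) * Real.logb 2 (1 + S / T) := by
            refine Finset.sum_congr rfl fun k _ => ?_
            rw [hratio k]
        _ = T * Real.logb 2 (1 + S / T) := by rw [← Finset.sum_mul, hsumτ]
    · intro k j
      rw [hratio k, hratio j]
end

section
/- NOMA dominates single-beamforming TDMA: let g_k ≥ 0 (effective channel gains), σ̃² > 0 (effective noise), E_k > 0, and T > 0. Then sup over (τ_k ≥ 0 with Σ τ_k ≤ T, and e_k ≤ E_k) of Σ_k τ_k log2(1 + e_k g_k/(τ_k σ̃²)) equals T·log2(1 + Σ_k E_k g_k/(T σ̃²)), which is the NOMA throughput with all devices using their full energy over the whole horizon T. -/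
open Real Finset

/-- Proposition 1 (relaxed setting): with a single common beamforming vector, the supremum
of the TDMA sum throughput Σ τ_k log2(1 + e_k g_k/(τ_k σ̃²)) over τ_k ≥ 0, Σ τ_k ≤ T,
0 ≤ e_k ≤ E_k, is exactly the NOMA value T log2(1 + Σ E_k g_k/(T σ̃²)), and it is attained. -/
theorem stmt_9 (K : ℕ) (g E : Fin K → ℝ) (σsq T : ℝ)
    (hg : ∀ k, 0 ≤ g k) (hE : ∀ k, 0 < E k) (hσ : 0 < σsq) (hT : 0 < T) :
    IsGreatest
      {R : ℝ | ∃ τ e : Fin K → ℝ,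
        (∀ k, 0 ≤ τ k) ∧ (∑ k, τ k) ≤ T ∧ (∀ k, 0 ≤ e k ∧ e k ≤ E k) ∧
        R = ∑ k, τ k * Real.logb 2 (1 + e k * g k / (τ k * σsq))}
      (T * Real.logb 2 (1 + (∑ k, E k * g k) / (T * σsq))) := by
  have hC0 : 0 ≤ ∑ k, E k * g k :=
    Finset.sum_nonneg fun k _ => mul_nonneg (hE k).le (hg k)
  set C : ℝ := ∑ k, E k * g k with hCdef
  have hTσ : 0 < T * σsq := mul_pos hT hσ
  set A : ℝ := 1 + C / (T * σsq) with hAdef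
  have hA1 : 1 ≤ A := le_add_of_nonneg_right (div_nonneg hC0 hTσ.le)
  have hA0 : (0:ℝ) < A := lt_of_lt_of_le one_pos hA1
  constructor
  · -- membership: the value is attained
    rcases eq_or_lt_of_le hC0 with h0 | hpos
    · refine ⟨fun _ => 0, E, fun _ => le_refl 0, by simp [hT.le],
        fun k => ⟨(hE k).le, le_refl _⟩, ?_⟩
      simp [hAdef, ← h0]
    · refine ⟨fun k => T * (E k * g k) / C, E,
        fun k => div_nonneg (mul_nonneg hT.le (mul_nonneg (hE k).le (hg k))) hC0, ?_,
        fun k => ⟨(hE k).le, le_refl _⟩, ?_⟩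
      · have : ∑ k, T * (E k * g k) / C = T := by
          rw [← Finset.sum_div, ← Finset.mul_sum, ← hCdef,
            mul_div_assoc, div_self hpos.ne', mul_one]
        rw [this]
      · have hterm : ∀ k, T * (E k * g k) / C *
            Real.logb 2 (1 + E k * g k / (T * (E k * g k) / C * σsq))
            = T * (E k * g k) / C * Real.logb 2 A := by
          intro k
          rcases eq_or_lt_of_le (mul_nonneg (hE k).le (hg k)) with hz | hp
          · rw [← hz]
            simp
          · congr 2
            rw [hAdef]
            field_simp
            have hgk : g k ≠ 0 := fun h => by simp [h] at hp
            congr 1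
            field_simp [(hE k).ne', hgk]
        calc T * Real.logb 2 A = (∑ k, T * (E k * g k) / C) * Real.logb 2 A := by
              rw [← Finset.sum_div, ← Finset.mul_sum, ← hCdef,
                mul_div_assoc, div_self hpos.ne', mul_one]
          _ = ∑ k, T * (E k * g k) / C * Real.logb 2 A := by rw [Finset.sum_mul]
          _ = ∑ k, T * (E k * g k) / C *
                Real.logb 2 (1 + E k * g k / (T * (E k * g k) / C * σsq)) := by
              exact Finset.sum_congr rfl fun k _ => (hterm k).symm
  · -- upper bound
    rintro R ⟨τ, e, hτ0, hτT, he, rfl⟩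
    have hlog2 : (0:ℝ) < Real.log 2 := Real.log_pos one_lt_two
    have hc0 : ∀ k, 0 ≤ e k * g k := fun k => mul_nonneg (he k).1 (hg k)
    have hcE : ∑ k, e k * g k ≤ C :=
      Finset.sum_le_sum fun k _ => mul_le_mul_of_nonneg_right (he k).2 (hg k)
    -- tangent line bound for each term (natural log)
    have key : ∀ k, τ k * Real.log (1 + e k * g k / (τ k * σsq)) ≤
        τ k * Real.log A + (τ k + e k * g k / σsq) / A - τ k := by
      intro k
      rcases eq_or_lt_of_le (hτ0 k) with h0 | hpos
      · rw [← h0]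
        have : (0:ℝ) ≤ (0 + e k * g k / σsq) / A :=
          div_nonneg (by simpa using div_nonneg (hc0 k) hσ.le) hA0.le
        simpa using this
      · have hx : 0 < 1 + e k * g k / (τ k * σsq) :=
          add_pos_of_pos_of_nonneg one_pos (div_nonneg (hc0 k) (by positivity))
        have h1 : Real.log (1 + e k * g k / (τ k * σsq)) ≤
            Real.log A + (1 + e k * g k / (τ k * σsq)) / A - 1 := by
          have h := Real.log_le_sub_one_of_pos (div_pos hx hA0)
          rw [Real.log_div hx.ne' hA0.ne'] at h
          linarith
        have h2 := mul_le_mul_of_nonneg_left h1 (hτ0 k)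
        have h3 : τ k * (1 + e k * g k / (τ k * σsq)) = τ k + e k * g k / σsq := by
          field_simp
        calc τ k * Real.log (1 + e k * g k / (τ k * σsq))
            ≤ τ k * (Real.log A + (1 + e k * g k / (τ k * σsq)) / A - 1) := h2
          _ = τ k * Real.log A + τ k * (1 + e k * g k / (τ k * σsq)) / A - τ k := by
              ring
          _ = τ k * Real.log A + (τ k + e k * g k / σsq) / A - τ k := by rw [h3]
    set s : ℝ := ∑ k, τ k with hsdef
    set C' : ℝ := ∑ k, e k * g k with hC'def
    have hs0 : 0 ≤ s := Finset.sum_nonneg fun k _ => hτ0 k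
    have hC'0 : 0 ≤ C' := Finset.sum_nonneg fun k _ => hc0 k
    have hsum : ∑ k, τ k * Real.log (1 + e k * g k / (τ k * σsq)) ≤
        s * Real.log A + (s + C' / σsq) / A - s := by
      calc ∑ k, τ k * Real.log (1 + e k * g k / (τ k * σsq))
          ≤ ∑ k, (τ k * Real.log A + (τ k + e k * g k / σsq) / A - τ k) :=
            Finset.sum_le_sum fun k _ => key k
        _ = s * Real.log A + (s + C' / σsq) / A - s := by
            rw [Finset.sum_sub_distrib, Finset.sum_add_distrib, ← Finset.sum_mul,
              ← Finset.sum_div, Finset.sum_add_distrib, ← Finset.sum_div,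
              ← hsdef, ← hC'def]
    -- key log lower bound : (A-1)/A ≤ log A
    have hlog : (A - 1) / A ≤ Real.log A := by
      have h := Real.log_le_sub_one_of_pos (show (0:ℝ) < 1 / A by positivity)
      rw [one_div, Real.log_inv] at h
      have h' : 1 - 1 / A ≤ Real.log A := by
        rw [one_div]; linarith
      calc (A - 1) / A = 1 - 1 / A := by field_simp
        _ ≤ Real.log A := h'
    have hmain : s * Real.log A + (s + C' / σsq) / A - s ≤ T * Real.log A := by
      have step1 : (s + C' / σsq) / A ≤ (s + C / σsq) / A := by
        gcongr
      have step2 : (s + C / σsq) / A - s = (T - s) * ((A - 1) / A) := by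
        rw [hAdef]
        have hne : T * σsq + C ≠ 0 := by positivity
        field_simp
        ring
      have step3 : (T - s) * ((A - 1) / A) ≤ (T - s) * Real.log A :=
        mul_le_mul_of_nonneg_left hlog (by linarith)
      have hring : s * Real.log A + (T - s) * Real.log A = T * Real.log A := by ring
      linarith
    -- pass from natural log to logb 2
    have hfinal : ∑ k, τ k * Real.log (1 + e k * g k / (τ k * σsq)) ≤
        T * Real.log A := le_trans hsum hmain
    simp only [Real.logb]
    calc ∑ k, τ k * (Real.log (1 + e k * g k / (τ k * σsq)) / Real.log 2)
        = (∑ k, τ k * Real.log (1 + e k * g k / (τ k * σsq))) / Real.log 2 := by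
          rw [Finset.sum_div]
          exact Finset.sum_congr rfl fun k _ => (mul_div_assoc _ _ _).symm
      _ ≤ (T * Real.log A) / Real.log 2 := by gcongr
      _ = T * (Real.log A / Real.log 2) := by rw [mul_div_assoc]
end

section
/- Strict improvement when SNRs differ: with g_k ≥ 0, σ̃² > 0, and τ_k > 0, e_k ≥ 0 for k = 1,…,K, if there exist indices k ≠ j with e_k g_k/τ_k ≠ e_j g_j/τ_j, then Σ_k τ_k log2(1 + e_k g_k/(τ_k σ̃²)) < (Σ_k τ_k)·log2(1 + Σ_k e_k g_k/((Σ_k τ_k)·σ̃²)). -/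
open Real Finset

lemma aux_strictConcave : StrictConcaveOn ℝ (Set.Ici (0:ℝ)) (fun x => Real.logb 2 (1+x)) := by
  constructor
  · exact convex_Ici 0
  · intro x hx y hy hxy a b ha hb hab
    have h1 : (0:ℝ) < 1 + x := by have := Set.mem_Ici.1 hx; linarith
    have h2 : (0:ℝ) < 1 + y := by have := Set.mem_Ici.1 hy; linarith
    have hxy' : (1:ℝ) + x ≠ 1 + y := by intro h; exact hxy (by linarith)
    have hlog := strictConcaveOn_log_Ioi.2 (Set.mem_Ioi.2 h1) (Set.mem_Ioi.2 h2) hxy' ha hb hab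
    have hkey : a • (1+x) + b • (1+y) = 1 + (a • x + b • y) := by
      simp only [smul_eq_mul]; ring_nf; linarith [hab]
    rw [hkey] at hlog
    have hl2 : (0:ℝ) < Real.log 2 := Real.log_pos (by norm_num)
    simp only [smul_eq_mul, Real.logb] at *
    calc a * (Real.log (1+x) / Real.log 2) + b * (Real.log (1+y) / Real.log 2)
        = (a * Real.log (1+x) + b * Real.log (1+y)) / Real.log 2 := by ring
      _ < Real.log (1 + (a*x + b*y)) / Real.log 2 :=
          (div_lt_div_iff_of_pos_right hl2).2 hlog

/-- Strict Jensen improvement: if two devices have different per-slot SNRs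
e_k g_k/τ_k ≠ e_j g_j/τ_j, then the aggregated (NOMA) throughput strictly exceeds the
TDMA sum throughput. -/
theorem stmt_10 (K : ℕ) (g e τ : Fin K → ℝ) (σsq : ℝ)
    (hg : ∀ k, 0 ≤ g k) (he : ∀ k, 0 ≤ e k) (hτ : ∀ k, 0 < τ k) (hσ : 0 < σsq)
    (hne : ∃ k j, k ≠ j ∧ e k * g k / τ k ≠ e j * g j / τ j) :
    ∑ k, τ k * Real.logb 2 (1 + e k * g k / (τ k * σsq)) <
      (∑ k, τ k) * Real.logb 2 (1 + (∑ k, e k * g k) / ((∑ k, τ k) * σsq)) := by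
  obtain ⟨k0, j0, hkj, hdiff⟩ := hne
  have hK : 0 < K := Nat.pos_of_ne_zero (by rintro rfl; exact absurd k0.2 (by simp))
  set S : ℝ := ∑ k, τ k with hS
  have hSpos : 0 < S := Finset.sum_pos (fun i _ => hτ i) (Finset.univ_nonempty_iff.2 ⟨k0⟩)
  set w : Fin K → ℝ := fun k => τ k / S with hw
  set p : Fin K → ℝ := fun k => e k * g k / (τ k * σsq) with hp
  have hw0 : ∀ i ∈ Finset.univ, 0 < w i := fun i _ => div_pos (hτ i) hSpos
  have hw1 : ∑ i, w i = 1 := by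
    rw [hw]; simp only []
    rw [← Finset.sum_div, ← hS, div_self hSpos.ne']
  have hmem : ∀ i ∈ Finset.univ, p i ∈ Set.Ici (0:ℝ) := by
    intro i _
    exact Set.mem_Ici.2 (div_nonneg (mul_nonneg (he i) (hg i)) (mul_nonneg (hτ i).le hσ.le))
  have hpne : p k0 ≠ p j0 := by
    intro h
    apply hdiff
    have h' : e k0 * g k0 / τ k0 / σsq = e j0 * g j0 / τ j0 / σsq := by
      rw [div_div, div_div]; exact h
    have := congrArg (· * σsq) h'
    simpa [div_mul_cancel₀, hσ.ne'] using this
  have hjensen := aux_strictConcave.lt_map_sum hw0 hw1 hmem ⟨k0, Finset.mem_univ _, j0, Finset.mem_univ _, hpne⟩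
  have hsum : ∑ i, w i • p i = (∑ i, e i * g i) / (S * σsq) := by
    rw [Finset.sum_div]
    apply Finset.sum_congr rfl
    intro i _
    rw [hw, hp, smul_eq_mul]
    have h1 := (hτ i).ne'
    have h2 := hSpos.ne'
    have h3 := hσ.ne'
    field_simp
  rw [hsum] at hjensen
  have hjensen' : ∑ i, (τ i / S) * Real.logb 2 (1 + p i) <
      Real.logb 2 (1 + (∑ i, e i * g i) / (S * σsq)) := hjensen
  have := mul_lt_mul_of_pos_left hjensen' hSpos
  rw [Finset.mul_sum] at this
  calc ∑ i, τ i * Real.logb 2 (1 + e i * g i / (τ i * σsq))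
      = ∑ i, S * ((τ i / S) * Real.logb 2 (1 + p i)) := by
        apply Finset.sum_congr rfl; intro i _
        rw [hp]
        have h2 := hSpos.ne'
        field_simp
    _ < S * Real.logb 2 (1 + (∑ i, e i * g i) / (S * σsq)) := this
    _ = _ := rfl
end
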